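/- arXiv:2010.06457 — 3 statements merged into one kernel-verified Lean document; each statement's English description precedes it below -/
import Mathlib

section
/- Let n be odd, a ∈ Z_n with shares a0, a1 ∈ {0,...,n−1} such that a0 + a1 ≡ a (mod n). Define DReLU(a) = 1 iff a < ⌈n/2⌉ (for the canonical representative a ∈ {0,...,n−1}). Then DReLU(a) = 1 if and only if the integer a0 + a1 lies in [0, ⌈n/2⌉) ∪ [n, n + ⌈n/2⌉). -/
/-- For odd `n` and shares `a0, a1` of `a` over `Z_n`,
`DReLU(a) = 1` (i.e. `a < ⌈n/2⌉`) iff the integer `a0 + a1` lies in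
`[0, ⌈n/2⌉) ∪ [n, n + ⌈n/2⌉)`. -/
theorem drelu_ring_characterization (n a a0 a1 : ℕ) (hodd : Odd n)
    (ha0 : a0 < n) (ha1 : a1 < n) (ha : a = (a0 + a1) % n) :
    a < (n + 1) / 2 ↔
      (a0 + a1 < (n + 1) / 2 ∨ (n ≤ a0 + a1 ∧ a0 + a1 < n + (n + 1) / 2)) := by
  rcases lt_or_ge (a0 + a1) n with h | h
  · rw [Nat.mod_eq_of_lt h] at ha
    omega
  · rw [Nat.mod_eq_sub_mod h, Nat.mod_eq_of_lt (by omega)] at ha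
    omega
end

section
/- (Truncation theorem) Let ℓ > s ≥ 0, L = 2^ℓ, and a0, a1 ∈ {0,...,L−1} with a = (a0 + a1) mod L. Write a_b = a_b^1·2^s + a_b^0 with 0 ≤ a_b^0 < 2^s for b ∈ {0,1}, and a = a^1·2^s + a^0 with 0 ≤ a^0 < 2^s. Let n' = 2^{ℓ−1} and corr = −1 if (a ≥ n') ∧ (a0 < n') ∧ (a1 < n'), corr = 1 if (a < n') ∧ (a0 ≥ n') ∧ (a1 ≥ n'), and corr = 0 otherwise. Then (a0 ≫ s) + (a1 ≫ s) + corr·2^{ℓ−s} + 1[a0^0 + a1^0 ≥ 2^s] ≡ (a ≫ s) (mod 2^ℓ), where x ≫ s denotes arithmetic right shift of the ℓ-bit two's-complement value, i.e., x ≫ s = ⌊(x − 1[x ≥ 2^{ℓ−1}]·2^ℓ)/2^s⌋ mod 2^ℓ. -/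
/-- Arithmetic right shift by `s` of the `ℓ`-bit two's-complement value `x`:
`x ≫ s = ⌊(x - 1[x ≥ 2^(ℓ-1)]·2^ℓ)/2^s⌋ mod 2^ℓ`. -/
def arshift (ℓ s : ℕ) (x : ℤ) : ℤ :=
  Int.fdiv (x - (if 2 ^ (ℓ - 1) ≤ x then (2 : ℤ) ^ ℓ else 0)) (2 ^ s) % 2 ^ ℓ

lemma ediv_add_ediv' (x y M : ℤ) (hM : 0 < M) :
    (x + y) / M = x / M + y / M + (if M ≤ x % M + y % M then 1 else 0) := by
  have hx := Int.mul_ediv_add_emod x M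
  have hy := Int.mul_ediv_add_emod y M
  have hx0 := Int.emod_nonneg x hM.ne'
  have hx1 := Int.emod_lt_of_pos x hM
  have hy0 := Int.emod_nonneg y hM.ne'
  have hy1 := Int.emod_lt_of_pos y hM
  split_ifs with h
  · have := ((Int.ediv_emod_unique (a := x + y)
      (q := x / M + y / M + 1) (r := x % M + y % M - M) hM).mpr
      ⟨by ring_nf; linarith, by linarith, by linarith⟩).1
    linarith [this]
  · have := ((Int.ediv_emod_unique (a := x + y)
      (q := x / M + y / M) (r := x % M + y % M) hM).mpr
      ⟨by ring_nf; linarith, by linarith, by linarith⟩).1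
    linarith [this]

lemma trunc_aux (N M n' K a a0 a1 corr : ℤ)
    (hM : 0 < M) (hn' : 1 ≤ n') (hN2 : N = 2 * n') (hNM : N = K * M)
    (ha0 : 0 ≤ a0) (ha0' : a0 < N) (ha1 : 0 ≤ a1) (ha1' : a1 < N)
    (ha : a = (a0 + a1) % N)
    (hcorr : corr =
      if n' ≤ a ∧ a0 < n' ∧ a1 < n' then -1
      else if a < n' ∧ n' ≤ a0 ∧ n' ≤ a1 then 1 else 0) :
    Int.ModEq N
      ((a0 - (if n' ≤ a0 then N else 0)).fdiv M % N
        + (a1 - (if n' ≤ a1 then N else 0)).fdiv M % N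
        + corr * K + (if M ≤ a0 % M + a1 % M then 1 else 0))
      ((a - (if n' ≤ a then N else 0)).fdiv M % N) := by
  have hNpos : 0 < N := by linarith
  have ha0N : 0 ≤ a := ha ▸ Int.emod_nonneg _ hNpos.ne'
  have ha1N : a < N := ha ▸ Int.emod_lt_of_pos _ hNpos
  have hdvd : (a0 + a1 - a) % N = 0 := by
    rw [Int.sub_emod, ha, Int.emod_emod_of_dvd _ dvd_rfl]
    simp
  obtain ⟨c, hc⟩ : N ∣ (a0 + a1 - a) := Int.dvd_of_emod_eq_zero hdvd
  have hclb : -1 < c := by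
    have : N * (-1) < N * c := by rw [← hc]; linarith
    exact lt_of_mul_lt_mul_left this hNpos.le
  have hcub : c < 2 := by
    have : N * c < N * 2 := by rw [← hc]; linarith
    exact lt_of_mul_lt_mul_left this hNpos.le
  have hc01 : c = 0 ∨ c = 1 := by omega
  set e0 : ℤ := if n' ≤ a0 then N else 0 with he0
  set e1 : ℤ := if n' ≤ a1 then N else 0 with he1
  set ea : ℤ := if n' ≤ a then N else 0 with hea
  have key : a - ea = (a0 - e0) + (a1 - e1) + corr * N := by
    rcases hc01 with rfl | rfl <;>
    · simp only [mul_zero, mul_one] at hc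
      rw [he0, he1, hea, hcorr]
      split_ifs <;> omega
  have hedivN : ∀ e : ℤ, (e = N ∨ e = 0) → e % M = 0 := by
    rintro e (rfl | rfl)
    · rw [hNM]; simp [Int.mul_emod_left]
    · simp
  have he0M : (a0 - e0) % M = a0 % M := by
    rw [Int.sub_emod, hedivN e0 (by rw [he0]; split_ifs <;> simp)]
    simp
  have he1M : (a1 - e1) % M = a1 % M := by
    rw [Int.sub_emod, hedivN e1 (by rw [he1]; split_ifs <;> simp)]
    simp
  have main : (a - ea).fdiv M =
      (a0 - e0).fdiv M + (a1 - e1).fdiv M + corr * K +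
        (if M ≤ a0 % M + a1 % M then 1 else 0) := by
    rw [Int.fdiv_eq_ediv_of_nonneg _ hM.le, Int.fdiv_eq_ediv_of_nonneg _ hM.le,
      Int.fdiv_eq_ediv_of_nonneg _ hM.le, key]
    have h2 : (a0 - e0) + (a1 - e1) + corr * N
        = ((a0 - e0) + (a1 - e1)) + (corr * K) * M := by
      rw [hNM]; ring
    rw [h2, Int.add_mul_ediv_right _ _ hM.ne',
      ediv_add_ediv' _ _ _ hM, he0M, he1M]
    ring
  have emod : ∀ z : ℤ, Int.ModEq N (z % N) z :=
    fun z => Int.emod_emod_of_dvd z dvd_rfl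
  calc ((a0 - e0).fdiv M % N) + ((a1 - e1).fdiv M % N) + corr * K +
        (if M ≤ a0 % M + a1 % M then 1 else 0)
      ≡ (a0 - e0).fdiv M + (a1 - e1).fdiv M + corr * K +
        (if M ≤ a0 % M + a1 % M then 1 else 0) [ZMOD N] :=
        (((emod _).add (emod _)).add_right _).add_right _
    _ = (a - ea).fdiv M := main.symm
    _ ≡ (a - ea).fdiv M % N [ZMOD N] := (emod _).symm

/-- Truncation theorem: `(a0 ≫ s) + (a1 ≫ s) + corr·2^(ℓ-s) +
1[a0^0 + a1^0 ≥ 2^s] ≡ (a ≫ s) (mod 2^ℓ)`. -/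
theorem truncation_theorem (ℓ s : ℕ) (a a0 a1 corr : ℤ) (hs : s < ℓ)
    (ha0 : 0 ≤ a0) (ha0' : a0 < 2 ^ ℓ)
    (ha1 : 0 ≤ a1) (ha1' : a1 < 2 ^ ℓ)
    (ha : a = (a0 + a1) % 2 ^ ℓ)
    (hcorr : corr =
      if 2 ^ (ℓ - 1) ≤ a ∧ a0 < 2 ^ (ℓ - 1) ∧ a1 < 2 ^ (ℓ - 1) then -1
      else if a < 2 ^ (ℓ - 1) ∧ 2 ^ (ℓ - 1) ≤ a0 ∧ 2 ^ (ℓ - 1) ≤ a1 then 1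
      else 0) :
    Int.ModEq (2 ^ ℓ)
      (arshift ℓ s a0 + arshift ℓ s a1 + corr * 2 ^ (ℓ - s) +
        (if 2 ^ s ≤ a0 % 2 ^ s + a1 % 2 ^ s then 1 else 0))
      (arshift ℓ s a) := by
  unfold arshift
  refine trunc_aux (2 ^ ℓ) (2 ^ s) (2 ^ (ℓ - 1)) (2 ^ (ℓ - s)) a a0 a1 corr
    (by positivity) ?_ ?_ ?_ ha0 ha0' ha1 ha1' ha hcorr
  · exact one_le_pow₀ (by norm_num)
  · rw [← pow_succ']; congr 1; omega
  · rw [← pow_add]; congr 1; omega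
end

section
/- (Division theorem) Let n = n^1·d + n^0 with 0 ≤ n^0 < d < n, and let n' = ⌈n/2⌉. Define rdiv(a, d) = idiv(a − 1[a ≥ n']·n, d) mod n for a ∈ {0,...,n−1}, where idiv is integer division rounding toward −∞. Let a0, a1 ∈ {0,...,n−1} with a = (a0 + a1) mod n. Write a_b = a_b^1·d + a_b^0 with 0 ≤ a_b^0 < d. Define corr = −1 if (a ≥ n') ∧ (a0 < n') ∧ (a1 < n'), corr = 1 if (a < n') ∧ (a0 ≥ n') ∧ (a1 ≥ n'), else corr = 0. Define A = a0^0 + a1^0 − (1[a0 ≥ n'] + 1[a1 ≥ n'] − corr)·n^0, B = idiv(a0^0 − 1[a0 ≥ n']·n^0, d) + idiv(a1^0 − 1[a1 ≥ n']·n^0, d), and C = 1[A < d] + 1[A < 0] + 1[A < −d]. Then rdiv(a0, d) + rdiv(a1, d) + (corr·n^1 + 1 − C − B) ≡ rdiv(a, d) (mod n). -/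
set_option maxHeartbeats 1000000


/-- Division of a ring element by a positive integer:
`rdiv(a, d) = idiv(a - 1[a ≥ n']·n, d) mod n`. -/
def rdiv (n n' d a : ℤ) : ℤ :=
  Int.fdiv (a - (if n' ≤ a then n else 0)) d % n

/-- Division theorem:
`rdiv(a0,d) + rdiv(a1,d) + (corr·n^1 + 1 - C - B) ≡ rdiv(a,d) (mod n)`. -/
theorem division_theorem (n n1 n0 n' d a a0 a1 corr A B C : ℤ)
    (hn : n = n1 * d + n0) (hn0 : 0 ≤ n0) (hn0' : n0 < d) (hdn : d < n)
    (hn' : n' = (n + 1) / 2)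
    (ha0 : 0 ≤ a0) (ha0' : a0 < n) (ha1 : 0 ≤ a1) (ha1' : a1 < n)
    (ha : a = (a0 + a1) % n)
    (hcorr : corr =
      if n' ≤ a ∧ a0 < n' ∧ a1 < n' then -1
      else if a < n' ∧ n' ≤ a0 ∧ n' ≤ a1 then 1
      else 0)
    (hA : A = a0 % d + a1 % d -
      ((if n' ≤ a0 then (1 : ℤ) else 0) + (if n' ≤ a1 then 1 else 0) - corr) * n0)
    (hB : B = Int.fdiv (a0 % d - (if n' ≤ a0 then n0 else 0)) d +
      Int.fdiv (a1 % d - (if n' ≤ a1 then n0 else 0)) d)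
    (hC : C = (if A < d then (1 : ℤ) else 0) + (if A < 0 then 1 else 0) +
      (if A < -d then 1 else 0)) :
    Int.ModEq n
      (rdiv n n' d a0 + rdiv n n' d a1 + (corr * n1 + 1 - C - B))
      (rdiv n n' d a) := by
  have hd : 0 < d := by omega
  have hdpos : (0:ℤ) ≤ d := le_of_lt hd
  -- express a explicitly
  have hs : a = a0 + a1 - (if n ≤ a0 + a1 then n else 0) := by
    split_ifs with h
    · rw [ha, show a0 + a1 = (a0 + a1 - n) + n * 1 by ring, Int.add_mul_emod_self_left,
        Int.emod_eq_of_lt (by omega) (by omega)]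
      ring
    · rw [ha, Int.emod_eq_of_lt (by omega) (by omega)]; ring
  set e0 : ℤ := if n' ≤ a0 then 1 else 0 with he0
  set e1 : ℤ := if n' ≤ a1 then 1 else 0 with he1
  -- the key exact identity
  have hkey : a - (if n' ≤ a then n else 0) = (a0 - e0 * n) + (a1 - e1 * n) + corr * n := by
    rw [he0, he1, hcorr]
    split_ifs at hs ⊢ <;> omega
  -- digits
  set r0 : ℤ := a0 % d with hr0
  set r1 : ℤ := a1 % d with hr1
  set q0 : ℤ := a0 / d with hq0
  set q1 : ℤ := a1 / d with hq1
  have hd0 : a0 = d * q0 + r0 := (Int.mul_ediv_add_emod a0 d).symm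
  have hd1 : a1 = d * q1 + r1 := (Int.mul_ediv_add_emod a1 d).symm
  have hr0b : 0 ≤ r0 ∧ r0 < d := ⟨Int.emod_nonneg _ (by omega), Int.emod_lt_of_pos _ hd⟩
  have hr1b : 0 ≤ r1 ∧ r1 < d := ⟨Int.emod_nonneg _ (by omega), Int.emod_lt_of_pos _ hd⟩
  -- generic decomposition
  have fdiv_dec : ∀ x q : ℤ, Int.fdiv (x + q * d) d = Int.fdiv x d + q := by
    intro x q
    rw [Int.fdiv_eq_ediv_of_nonneg _ hdpos, Int.fdiv_eq_ediv_of_nonneg _ hdpos,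
      Int.add_mul_ediv_right x q (by omega)]
  -- decompose the two summand fdivs
  have hf0 : Int.fdiv (a0 - e0 * n) d = Int.fdiv (r0 - e0 * n0) d + (q0 - e0 * n1) := by
    have h : a0 - e0 * n = (r0 - e0 * n0) + (q0 - e0 * n1) * d := by
      rw [hn]; linear_combination hd0
    rw [h, fdiv_dec]
  have hf1 : Int.fdiv (a1 - e1 * n) d = Int.fdiv (r1 - e1 * n0) d + (q1 - e1 * n1) := by
    have h : a1 - e1 * n = (r1 - e1 * n0) + (q1 - e1 * n1) * d := by
      rw [hn]; linear_combination hd1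
    rw [h, fdiv_dec]
  -- e0 + e1 - corr ∈ {0,1,2}
  have hecorr : 0 ≤ e0 + e1 - corr ∧ e0 + e1 - corr ≤ 2 := by
    rw [he0, he1, hcorr]; split_ifs <;> omega
  have ht1 : 0 ≤ (e0 + e1 - corr) * n0 := mul_nonneg hecorr.1 hn0
  have ht2 : (e0 + e1 - corr) * n0 ≤ 2 * n0 :=
    mul_le_mul_of_nonneg_right hecorr.2 hn0
  have hAb : -(2*d) < A ∧ A < 2*d := by
    constructor <;> nlinarith [hr0b.1, hr0b.2, hr1b.1, hr1b.2]
  -- fdiv A d = 1 - C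
  have hfd_int : ∀ k : ℤ, k * d ≤ A → A < (k+1) * d → Int.fdiv A d = k := by
    intro k h1 h2
    have h : A = (A - k * d) + k * d := by ring
    rw [h, fdiv_dec, Int.fdiv_eq_ediv_of_nonneg _ hdpos,
      Int.ediv_eq_zero_of_lt (by linarith) (by linarith)]
    ring
  have hAC : Int.fdiv A d = 1 - C := by
    by_cases h1 : A < -d
    · rw [hfd_int (-2) (by linarith [hAb.1]) (by linarith)]
      rw [hC]; split_ifs <;> omega
    · by_cases h2 : A < 0
      · rw [hfd_int (-1) (by linarith) (by linarith)]
        rw [hC]; split_ifs <;> omega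
      · by_cases h3 : A < d
        · rw [hfd_int 0 (by linarith) (by linarith)]
          rw [hC]; split_ifs <;> omega
        · rw [hfd_int 1 (by linarith) (by linarith [hAb.2])]
          rw [hC]; split_ifs <;> omega
  -- the fdiv of a's representative
  have hfa : Int.fdiv (a - (if n' ≤ a then n else 0)) d =
      Int.fdiv A d + ((q0 - e0 * n1) + (q1 - e1 * n1) + corr * n1) := by
    have h : (a0 - e0 * n) + (a1 - e1 * n) + corr * n =
        A + ((q0 - e0 * n1) + (q1 - e1 * n1) + corr * n1) * d := by
      rw [hA, hn]; linear_combination hd0 + hd1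
    rw [hkey, h, fdiv_dec]
  -- exact equality of the un-modded quantities
  have hexact : Int.fdiv (a0 - (if n' ≤ a0 then n else 0)) d +
      Int.fdiv (a1 - (if n' ≤ a1 then n else 0)) d + (corr * n1 + 1 - C - B) =
      Int.fdiv (a - (if n' ≤ a then n else 0)) d := by
    have i0 : (if n' ≤ a0 then n else 0) = e0 * n := by rw [he0]; split_ifs <;> ring
    have i1 : (if n' ≤ a1 then n else 0) = e1 * n := by rw [he1]; split_ifs <;> ring
    have j0 : (if n' ≤ a0 then n0 else 0) = e0 * n0 := by rw [he0]; split_ifs <;> ring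
    have j1 : (if n' ≤ a1 then n0 else 0) = e1 * n0 := by rw [he1]; split_ifs <;> ring
    have hB' : B = Int.fdiv (r0 - e0 * n0) d + Int.fdiv (r1 - e1 * n0) d := by
      rw [hB, j0, j1]
    rw [i0, i1, hf0, hf1, hfa, hAC, hB']
    ring
  -- pass to mod n
  show (Int.fdiv (a0 - (if n' ≤ a0 then n else 0)) d % n +
      Int.fdiv (a1 - (if n' ≤ a1 then n else 0)) d % n + (corr * n1 + 1 - C - B)) ≡
      Int.fdiv (a - (if n' ≤ a then n else 0)) d % n [ZMOD n]
  have m0 : Int.ModEq n (Int.fdiv (a0 - (if n' ≤ a0 then n else 0)) d % n)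
      (Int.fdiv (a0 - (if n' ≤ a0 then n else 0)) d) := Int.emod_emod_of_dvd _ dvd_rfl
  have m1 : Int.ModEq n (Int.fdiv (a1 - (if n' ≤ a1 then n else 0)) d % n)
      (Int.fdiv (a1 - (if n' ≤ a1 then n else 0)) d) := Int.emod_emod_of_dvd _ dvd_rfl
  have ma : Int.ModEq n (Int.fdiv (a - (if n' ≤ a then n else 0)) d)
      (Int.fdiv (a - (if n' ≤ a then n else 0)) d % n) :=
    (Int.emod_emod_of_dvd _ dvd_rfl).symm
  exact (((m0.add m1).add (Int.ModEq.refl (corr * n1 + 1 - C - B))).trans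
    (hexact ▸ Int.ModEq.refl _)).trans ma
end
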